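/- arXiv:1404.0895 — 4 statements merged into one kernel-verified Lean document; each statement's English description precedes it below -/
import Mathlib

section
/- Let f ∈ 𝒩^{μ,λ}_Σ(φ) where φ(z) = 1 + B₁z + B₂z² + ... with B₁ > 0 and all Bⱼ real. Then with p₂, q₂ the second Carathéodory coefficients coming from the two subordinations, a₂² = B₁³(p₂ + q₂) / (2(μ+1)(2λ+μ)B₁² + 4(B₁ − B₂)(λ+μ)²), provided the denominator is nonzero. -/
/-- Formula for a₂² from the coefficient identities of the class 𝒩^{μ,λ}_Σ(φ). -/
theorem stmt_7 (μ lam B₁ B₂ : ℝ) (hlam : 1 ≤ lam) (hμ : 0 ≤ μ) (hB₁ : 0 < B₁)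
    (a₂ a₃ p₁ p₂ q₁ q₂ : ℂ)
    (h1 : ((lam:ℂ) + μ) * a₂ = (B₁:ℂ) * p₁ / 2)
    (h2 : -(((lam:ℂ) + μ)) * a₂ = (B₁:ℂ) * q₁ / 2)
    (h3 : (2*(lam:ℂ) + μ) * (a₃ + a₂^2/2 * ((μ:ℂ) - 1))
        = (B₁:ℂ)/2 * (p₂ - p₁^2/2) + (B₂:ℂ)/4 * p₁^2)
    (h4 : (2*(lam:ℂ) + μ) * (a₂^2/2 * ((μ:ℂ) + 3) - a₃)
        = (B₁:ℂ)/2 * (q₂ - q₁^2/2) + (B₂:ℂ)/4 * q₁^2)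
    (hden : (2*((μ:ℂ)+1)*(2*(lam:ℂ)+μ)*(B₁:ℂ)^2 + 4*((B₁:ℂ)-(B₂:ℂ))*((lam:ℂ)+μ)^2) ≠ 0) :
    a₂^2 = (B₁:ℂ)^3 * (p₂ + q₂) /
      (2*((μ:ℂ)+1)*(2*(lam:ℂ)+μ)*(B₁:ℂ)^2 + 4*((B₁:ℂ)-(B₂:ℂ))*((lam:ℂ)+μ)^2) := by
  rw [eq_div_iff hden]
  linear_combination 2*(B₁:ℂ)^2*h3 + 2*(B₁:ℂ)^2*h4
    + 2*((B₁:ℂ)-B₂)*(((lam:ℂ)+μ)*a₂ + (B₁:ℂ)*p₁/2)*h1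
    + 2*((B₁:ℂ)-B₂)*(-(((lam:ℂ)+μ))*a₂ + (B₁:ℂ)*q₁/2)*h2
end

section
/- If f ∈ 𝒩^{μ,λ}_Σ(φ) then |a₃ − a₂²| ≤ B₁/(2λ+μ). -/
open Complex Metric

noncomputable def coeff (f : ℂ → ℂ) (n : ℕ) : ℂ := iteratedDeriv n f 0 / n.factorial
 
def IsSchwarz (w : ℂ → ℂ) : Prop :=
  AnalyticOnNhd ℂ w (ball 0 1) ∧ w 0 = 0 ∧ ∀ z ∈ ball (0:ℂ) 1, ‖w z‖ < 1
 
def BiUnivalent (f g : ℂ → ℂ) : Prop :=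
  AnalyticOnNhd ℂ f (ball 0 1) ∧ Set.InjOn f (ball 0 1) ∧ f 0 = 0 ∧ deriv f 0 = 1 ∧
  AnalyticOnNhd ℂ g (ball 0 1) ∧ Set.InjOn g (ball 0 1) ∧
  (∀ᶠ z in nhds (0:ℂ), g (f z) = z) ∧ (∀ᶠ w in nhds (0:ℂ), f (g w) = w)
 
noncomputable def Nexpr (μ lam : ℝ) (f : ℂ → ℂ) (z : ℂ) : ℂ :=
  (1 - (lam:ℂ)) * (f z / z) ^ (μ:ℂ) + (lam:ℂ) * deriv f z * (f z / z) ^ ((μ:ℂ) - 1)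

def MemN (μ lam : ℝ) (φ f g : ℂ → ℂ) : Prop :=
  BiUnivalent f g ∧
  (∃ r, IsSchwarz r ∧ ∀ z ∈ ball (0:ℂ) 1, z ≠ 0 → Nexpr μ lam f z = φ (r z)) ∧
  (∃ s, IsSchwarz s ∧ ∀ w ∈ ball (0:ℂ) 1, w ≠ 0 → Nexpr μ lam g w = φ (s w))

namespace FeketeSzego

open Filter

lemma analyticAt_deriv {F : ℂ → ℂ} {x : ℂ} (h : AnalyticAt ℂ F x) : AnalyticAt ℂ (deriv F) x := by
  have h2 : AnalyticOnNhd ℂ F {x} := fun y hy => by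
    rw [Set.mem_singleton_iff] at hy; rw [hy]; exact h
  exact h2.deriv x rfl

lemma compEv {φ r : ℂ → ℂ} (hφ : AnalyticAt ℂ φ (r 0)) (hr : AnalyticAt ℂ r 0) :
    deriv (fun z => φ (r z)) =ᶠ[nhds (0:ℂ)] fun z => deriv φ (r z) * deriv r z := by
  have h1 : ∀ᶠ z in nhds (0:ℂ), AnalyticAt ℂ r z := hr.eventually_analyticAt
  have h2 : ∀ᶠ z in nhds (0:ℂ), AnalyticAt ℂ φ (r z) :=
    hr.continuousAt.tendsto.eventually hφ.eventually_analyticAt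
  filter_upwards [h1, h2] with z hz1 hz2
  exact deriv_comp z hz2.differentiableAt hz1.differentiableAt

lemma compD1 {φ r : ℂ → ℂ} (hφ : AnalyticAt ℂ φ (r 0)) (hr : AnalyticAt ℂ r 0) :
    deriv (fun z => φ (r z)) 0 = deriv φ (r 0) * deriv r 0 :=
  (compEv hφ hr).eq_of_nhds

lemma compD2 {φ r : ℂ → ℂ} (hφ : AnalyticAt ℂ φ (r 0)) (hr : AnalyticAt ℂ r 0) :
    deriv (deriv (fun z => φ (r z))) 0
      = deriv (deriv φ) (r 0) * (deriv r 0)^2 + deriv φ (r 0) * deriv (deriv r) 0 := by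
  rw [(compEv hφ hr).deriv_eq]
  have hφ' : AnalyticAt ℂ (fun z => deriv φ (r z)) 0 :=
    ((analyticAt_deriv hφ).comp hr)
  rw [deriv_fun_mul hφ'.differentiableAt (analyticAt_deriv hr).differentiableAt]
  rw [compD1 (analyticAt_deriv hφ) hr]
  ring

lemma prodEv {F G : ℂ → ℂ} (hF : AnalyticAt ℂ F 0) (hG : AnalyticAt ℂ G 0) :
    deriv (fun z => F z * G z) =ᶠ[nhds (0:ℂ)] fun z => deriv F z * G z + F z * deriv G z := by
  filter_upwards [hF.eventually_analyticAt, hG.eventually_analyticAt] with z h1 h2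
  exact deriv_fun_mul h1.differentiableAt h2.differentiableAt

lemma prodD2 {F G : ℂ → ℂ} (hF : AnalyticAt ℂ F 0) (hG : AnalyticAt ℂ G 0) :
    deriv (deriv (fun z => F z * G z)) 0
      = deriv (deriv F) 0 * G 0 + 2 * (deriv F 0 * deriv G 0) + F 0 * deriv (deriv G) 0 := by
  rw [(prodEv hF hG).deriv_eq]
  rw [deriv_fun_add ((analyticAt_deriv hF).fun_mul hG).differentiableAt
    (hF.fun_mul (analyticAt_deriv hG)).differentiableAt,
    deriv_fun_mul (analyticAt_deriv hF).differentiableAt hG.differentiableAt,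
    deriv_fun_mul hF.differentiableAt (analyticAt_deriv hG).differentiableAt]
  ring

lemma compD3 {φ r : ℂ → ℂ} (hφ : AnalyticAt ℂ φ (r 0)) (hr : AnalyticAt ℂ r 0) :
    deriv (deriv (deriv (fun z => φ (r z)))) 0
      = deriv (deriv (deriv φ)) (r 0) * (deriv r 0)^3
        + 3 * (deriv (deriv φ) (r 0) * (deriv r 0 * deriv (deriv r) 0))
        + deriv φ (r 0) * deriv (deriv (deriv r)) 0 := by
  rw [(compEv hφ hr).deriv.deriv_eq]
  rw [prodD2 (F := fun z => deriv φ (r z)) ((analyticAt_deriv hφ).comp hr) (analyticAt_deriv hr)]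
  rw [compD1 (analyticAt_deriv hφ) hr, compD2 (analyticAt_deriv hφ) hr]
  ring

lemma linD2 {X Y : ℂ → ℂ} (a b : ℂ) (hX : AnalyticAt ℂ X 0) (hY : AnalyticAt ℂ Y 0) :
    deriv (deriv (fun z => a * X z + b * Y z)) 0
      = a * deriv (deriv X) 0 + b * deriv (deriv Y) 0 := by
  have E : deriv (fun z => a * X z + b * Y z) =ᶠ[nhds (0:ℂ)]
      fun z => a * deriv X z + b * deriv Y z := by
    filter_upwards [hX.eventually_analyticAt, hY.eventually_analyticAt] with z h1 h2
    rw [deriv_fun_add (h1.differentiableAt.const_mul a) (h2.differentiableAt.const_mul b),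
      deriv_const_mul _ h1.differentiableAt, deriv_const_mul _ h2.differentiableAt]
  rw [E.deriv_eq,
    deriv_fun_add ((analyticAt_const.fun_mul (analyticAt_deriv hX)).differentiableAt)
      ((analyticAt_const.fun_mul (analyticAt_deriv hY)).differentiableAt),
    deriv_const_mul _ (analyticAt_deriv hX).differentiableAt,
    deriv_const_mul _ (analyticAt_deriv hY).differentiableAt]

lemma cpowEv {H : ℂ → ℂ} (hH : AnalyticAt ℂ H 0) (h1 : H 0 = 1) (c : ℂ) :
    deriv (fun z => H z ^ c) =ᶠ[nhds (0:ℂ)] fun z => c * H z ^ (c - 1) * deriv H z := by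
  have hs : ∀ᶠ z in nhds (0:ℂ), H z ∈ slitPlane := by
    have h0 : H 0 ∈ slitPlane := by rw [h1]; exact one_mem_slitPlane
    exact hH.continuousAt.tendsto.eventually (isOpen_slitPlane.eventually_mem h0)
  filter_upwards [hH.eventually_analyticAt, hs] with z hz1 hz2
  exact (hz1.differentiableAt.hasDerivAt.cpow_const hz2).deriv

lemma cpowA {H : ℂ → ℂ} (hH : AnalyticAt ℂ H 0) (h1 : H 0 = 1) (c : ℂ) :
    AnalyticAt ℂ (fun z => H z ^ c) 0 :=
  hH.cpow analyticAt_const (by rw [h1]; exact one_mem_slitPlane)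

lemma cpowD1 {H : ℂ → ℂ} (hH : AnalyticAt ℂ H 0) (h1 : H 0 = 1) (c : ℂ) :
    deriv (fun z => H z ^ c) 0 = c * deriv H 0 := by
  have := (cpowEv hH h1 c).eq_of_nhds
  simpa [h1, Complex.one_cpow] using this

lemma cpowD2 {H : ℂ → ℂ} (hH : AnalyticAt ℂ H 0) (h1 : H 0 = 1) (c : ℂ) :
    deriv (deriv (fun z => H z ^ c)) 0
      = c * (c-1) * (deriv H 0)^2 + c * deriv (deriv H) 0 := by
  rw [(cpowEv hH h1 c).deriv_eq]
  have e : (fun z => c * H z ^ (c-1) * deriv H z) = fun z => c * (H z ^ (c-1) * deriv H z) := by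
    funext z; ring
  rw [e, deriv_const_mul _ ((cpowA hH h1 (c-1)).fun_mul (analyticAt_deriv hH)).differentiableAt,
    deriv_fun_mul (cpowA hH h1 (c-1)).differentiableAt (analyticAt_deriv hH).differentiableAt,
    cpowD1 hH h1 (c-1)]
  simp [h1, Complex.one_cpow]
  ring

variable {F : ℂ → ℂ}

lemma dslope_analytic (hF : AnalyticAt ℂ F 0) : AnalyticAt ℂ (dslope F 0) 0 := by
  rcases hF with ⟨p, hp⟩
  exact ⟨p.fslope, hp.has_fpower_series_dslope_fslope⟩

lemma dslope_eq (hF0 : F 0 = 0) : ∀ z : ℂ, F z = z * dslope F 0 z := by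
  intro z
  have h := sub_smul_dslope F 0 z
  simp only [sub_zero, smul_eq_mul, hF0] at h
  rw [h]

lemma dslope_div (hF0 : F 0 = 0) {z : ℂ} (hz : z ≠ 0) : dslope F 0 z = F z / z := by
  rw [dslope_of_ne F hz, slope_def_field, hF0, sub_zero, sub_zero]

lemma fD (hF : AnalyticAt ℂ F 0) (hF0 : F 0 = 0) :
    deriv (deriv F) 0 = 2 * deriv (dslope F 0) 0 ∧
    deriv (deriv (deriv F)) 0 = 3 * deriv (deriv (dslope F 0)) 0 := by
  set H := dslope F 0 with hHdef
  have hH : AnalyticAt ℂ H 0 := dslope_analytic hF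
  have hFz : F = fun z => z * H z := funext (dslope_eq hF0)
  have E1 : deriv F =ᶠ[nhds (0:ℂ)] fun z => H z + z * deriv H z := by
    rw [hFz]
    filter_upwards [hH.eventually_analyticAt] with z hz
    rw [deriv_fun_mul differentiableAt_fun_id hz.differentiableAt]
    simp [mul_comm]
  have hzH' : AnalyticAt ℂ (fun z : ℂ => z * deriv H z) 0 :=
    (analyticAt_id.mul (analyticAt_deriv hH))
  constructor
  · rw [E1.deriv_eq, deriv_fun_add hH.differentiableAt hzH'.differentiableAt,
      deriv_fun_mul differentiableAt_fun_id (analyticAt_deriv hH).differentiableAt]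
    simp; ring
  · have E2 : deriv (deriv F) =ᶠ[nhds (0:ℂ)]
        fun z => 2 * deriv H z + z * deriv (deriv H) z := by
      refine E1.deriv.trans ?_
      filter_upwards [hH.eventually_analyticAt, (analyticAt_deriv hH).eventually_analyticAt]
        with z hz1 hz2
      rw [deriv_fun_add hz1.differentiableAt (differentiableAt_fun_id.fun_mul hz2.differentiableAt),
        deriv_fun_mul differentiableAt_fun_id hz2.differentiableAt]
      simp; ring
    rw [E2.deriv_eq]
    have hzH'' : AnalyticAt ℂ (fun z : ℂ => z * deriv (deriv H) z) 0 :=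
      (analyticAt_id.mul (analyticAt_deriv (analyticAt_deriv hH)))
    rw [deriv_fun_add (analyticAt_const.fun_mul (analyticAt_deriv hH)).differentiableAt
        hzH''.differentiableAt,
      deriv_const_mul _ (analyticAt_deriv hH).differentiableAt,
      deriv_fun_mul differentiableAt_fun_id (analyticAt_deriv (analyticAt_deriv hH)).differentiableAt]
    simp; ring

lemma subord (μ lam : ℝ) (φ F r : ℂ → ℂ)
    (hF : AnalyticAt ℂ F 0) (hF0 : F 0 = 0) (hF1 : deriv F 0 = 1)
    (hφ : AnalyticAt ℂ φ 0) (hφ0 : φ 0 = 1)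
    (hr : AnalyticAt ℂ r 0) (hr0 : r 0 = 0)
    (heq : ∀ᶠ z in nhds (0:ℂ), z ≠ 0 → Nexpr μ lam F z = φ (r z)) :
    ((μ:ℂ) + lam) * (deriv (deriv F) 0 / 2) = deriv φ 0 * deriv r 0 ∧
    ((μ:ℂ) + 2*lam) * (deriv (deriv (deriv F)) 0 / 6)
        + ((μ:ℂ) - 1) * ((μ:ℂ) + 2*lam) / 2 * (deriv (deriv F) 0 / 2)^2
      = deriv (deriv φ) 0 / 2 * (deriv r 0)^2 + deriv φ 0 * (deriv (deriv r) 0 / 2) := by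
  have hH : AnalyticAt ℂ (dslope F 0) 0 := dslope_analytic hF
  have hH1 : dslope F 0 0 = 1 := by rw [dslope_same]; exact hF1
  have hP : AnalyticAt ℂ (fun z => dslope F 0 z ^ (μ:ℂ)) 0 := cpowA hH hH1 _
  have hQ : AnalyticAt ℂ (fun z => dslope F 0 z ^ ((μ:ℂ)-1)) 0 := cpowA hH hH1 _
  have hW : AnalyticAt ℂ (fun z => deriv F z * dslope F 0 z ^ ((μ:ℂ)-1)) 0 :=
    (analyticAt_deriv hF).mul hQ
  have hNeq : (fun z => (1 - (lam:ℂ)) * (dslope F 0 z ^ (μ:ℂ))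
      + (lam:ℂ) * (deriv F z * dslope F 0 z ^ ((μ:ℂ)-1))) =ᶠ[nhds (0:ℂ)]
      fun z => φ (r z) := by
    filter_upwards [heq] with z hz
    rcases eq_or_ne z 0 with rfl | hz0
    · rw [hH1, hF1, hr0, hφ0, Complex.one_cpow, Complex.one_cpow]; ring
    · rw [← hz hz0]
      simp only [Nexpr, dslope_div hF0 hz0]
      ring
  have hfd := fD hF hF0
  have hPd1 := cpowD1 hH hH1 (μ:ℂ)
  have hQd1 := cpowD1 hH hH1 ((μ:ℂ)-1)
  have hPd2 := cpowD2 hH hH1 (μ:ℂ)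
  have hQd2 := cpowD2 hH hH1 ((μ:ℂ)-1)
  have hWd1 : deriv (fun z => deriv F z * dslope F 0 z ^ ((μ:ℂ)-1)) 0
      = deriv (deriv F) 0 + ((μ:ℂ)-1) * deriv (dslope F 0) 0 := by
    rw [deriv_fun_mul (analyticAt_deriv hF).differentiableAt hQ.differentiableAt, hQd1, hH1, hF1,
      Complex.one_cpow]
    ring
  have hWd2 : deriv (deriv (fun z => deriv F z * dslope F 0 z ^ ((μ:ℂ)-1))) 0
      = deriv (deriv (deriv F)) 0
        + 2 * (deriv (deriv F) 0 * (((μ:ℂ)-1) * deriv (dslope F 0) 0))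
        + (((μ:ℂ)-1) * ((μ:ℂ)-2) * (deriv (dslope F 0) 0)^2
            + ((μ:ℂ)-1) * deriv (deriv (dslope F 0)) 0) := by
    rw [prodD2 (analyticAt_deriv hF) hQ, hQd1, hQd2, hH1, hF1, Complex.one_cpow]
    ring
  have hL1 : deriv (fun z => (1 - (lam:ℂ)) * (dslope F 0 z ^ (μ:ℂ))
      + (lam:ℂ) * (deriv F z * dslope F 0 z ^ ((μ:ℂ)-1))) 0
      = (1 - (lam:ℂ)) * deriv (fun z => dslope F 0 z ^ (μ:ℂ)) 0
        + (lam:ℂ) * deriv (fun z => deriv F z * dslope F 0 z ^ ((μ:ℂ)-1)) 0 := by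
    rw [deriv_fun_add (analyticAt_const.fun_mul hP).differentiableAt
        (analyticAt_const.fun_mul hW).differentiableAt,
      deriv_const_mul _ hP.differentiableAt, deriv_const_mul _ hW.differentiableAt]
  have hR1 : deriv (fun z => φ (r z)) 0 = deriv φ 0 * deriv r 0 := by
    have h := compD1 (φ := φ) (r := r) (by rw [hr0]; exact hφ) hr
    rwa [hr0] at h
  have hR2 : deriv (deriv (fun z => φ (r z))) 0
      = deriv (deriv φ) 0 * (deriv r 0)^2 + deriv φ 0 * deriv (deriv r) 0 := by
    have h := compD2 (φ := φ) (r := r) (by rw [hr0]; exact hφ) hr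
    rwa [hr0] at h
  have Eq1 := hNeq.deriv_eq
  rw [hL1, hPd1, hWd1, hR1] at Eq1
  have Eq2 := hNeq.deriv.deriv_eq
  rw [linD2 _ _ hP hW, hPd2, hWd2, hR2] at Eq2
  constructor
  · rw [hfd.1]
    linear_combination Eq1 - (lam:ℂ) * hfd.1
  · rw [hfd.1, hfd.2]
    linear_combination Eq2 / 2 - (lam:ℂ) * ((μ:ℂ) - 1) * deriv (dslope F 0) 0 * hfd.1
      - (lam:ℂ)/2 * hfd.2

lemma inv_coeffs {f g : ℂ → ℂ} (hf : AnalyticAt ℂ f 0) (hg : AnalyticAt ℂ g 0)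
    (hf0 : f 0 = 0) (hf1 : deriv f 0 = 1) (hgf : ∀ᶠ z in nhds (0:ℂ), g (f z) = z) :
    deriv g 0 = 1 ∧ deriv (deriv g) 0 = - deriv (deriv f) 0 ∧
      deriv (deriv (deriv g)) 0 = 3 * (deriv (deriv f) 0)^2 - deriv (deriv (deriv f)) 0 := by
  have hg' : AnalyticAt ℂ g (f 0) := by rw [hf0]; exact hg
  have hGid : (fun z => g (f z)) =ᶠ[nhds (0:ℂ)] fun z => z := hgf
  have did : deriv (fun z : ℂ => z) = fun _ => (1:ℂ) := by funext z; exact deriv_id z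
  have h1 : deriv g 0 = 1 := by
    have h := hGid.deriv_eq
    rw [compD1 hg' hf] at h
    simpa [hf0, hf1] using h
  have h2 : deriv (deriv g) 0 = - deriv (deriv f) 0 := by
    have h := hGid.deriv.deriv_eq
    rw [compD2 hg' hf] at h
    have hrhs : deriv (deriv (fun z : ℂ => z)) 0 = 0 := by rw [did]; simp
    rw [hrhs, hf0, hf1, h1] at h
    linear_combination h
  refine ⟨h1, h2, ?_⟩
  have h := hGid.deriv.deriv.deriv_eq
  rw [compD3 hg' hf] at h
  have hrhs3 : deriv (deriv (deriv (fun z : ℂ => z))) 0 = 0 := by rw [did]; simp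
  rw [hrhs3, hf0, hf1, h1] at h
  linear_combination h - 3 * deriv (deriv f) 0 * h2

lemma schwarz_bound {w : ℂ → ℂ} (hw : AnalyticOnNhd ℂ w (ball 0 1))
    (hb : ∀ z ∈ ball (0:ℂ) 1, ‖w z‖ < 1) (n : ℕ) :
    ‖iteratedDeriv n w 0‖ ≤ n.factorial := by
  have key : ∀ ρ : ℝ, 0 < ρ → ρ < 1 →
      ‖iteratedDeriv n w 0‖ ≤ n.factorial * (ρ⁻¹) ^ n := by
    intro ρ h0 h1
    set R : NNReal := ⟨ρ, h0.le⟩ with hRdef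
    have hRρ : (R : ℝ) = ρ := rfl
    have hsub : closedBall (0:ℂ) R ⊆ ball 0 1 := by
      apply closedBall_subset_ball
      rw [hRρ]; exact h1
    have hd : DifferentiableOn ℂ w (closedBall 0 R) := fun z hz =>
      ((hw z (hsub hz)).differentiableAt).differentiableWithinAt
    have hps := hd.hasFPowerSeriesOnBall (by exact_mod_cast h0)
    have hit : iteratedDeriv n w 0 = n.factorial • (cauchyPowerSeries w 0 R n fun _ => (1:ℂ)) := by
      rw [iteratedDeriv, ← hps.factorial_smul (y := (1:ℂ)) n]
    have hle1 : ‖cauchyPowerSeries w 0 R n fun _ => (1:ℂ)‖ ≤ ‖cauchyPowerSeries w 0 R n‖ := by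
      have := (cauchyPowerSeries w 0 R n).le_opNorm fun _ => (1:ℂ)
      simpa using this
    have hint : (∫ θ : ℝ in (0)..2 * Real.pi, ‖w (circleMap 0 R θ)‖) ≤ 2 * Real.pi := by
      have hmem : ∀ θ : ℝ, circleMap 0 (R:ℝ) θ ∈ ball (0:ℂ) 1 := by
        intro θ
        rw [mem_ball_zero_iff]
        rw [norm_circleMap_zero]
        rw [abs_of_pos (by exact_mod_cast h0)]
        exact_mod_cast h1
      have hcont : Continuous fun θ : ℝ => ‖w (circleMap 0 (R:ℝ) θ)‖ := by
        apply Continuous.norm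
        apply continuous_iff_continuousAt.mpr
        intro θ
        exact ((hw _ (hmem θ)).continuousAt).comp (continuous_circleMap 0 (R:ℝ)).continuousAt
      calc (∫ θ : ℝ in (0)..2 * Real.pi, ‖w (circleMap 0 R θ)‖)
          ≤ ∫ _ : ℝ in (0)..2 * Real.pi, (1:ℝ) := by
            apply intervalIntegral.integral_mono_on Real.two_pi_pos.le
              (hcont.intervalIntegrable _ _) intervalIntegrable_const
            intro θ _
            exact (hb _ (hmem θ)).le
        _ = 2 * Real.pi := by simp
    have hnorm : ‖cauchyPowerSeries w 0 R n‖ ≤ (ρ⁻¹) ^ n := by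
      refine (norm_cauchyPowerSeries_le w 0 R n).trans ?_
      have h2pi : (0:ℝ) < (2 * Real.pi)⁻¹ := by positivity
      have habsR : |(R:ℝ)|⁻¹ ^ n = (ρ⁻¹) ^ n := by
        rw [hRρ, abs_of_pos h0]
      rw [habsR]
      have : (2 * Real.pi)⁻¹ * (∫ θ : ℝ in (0)..2 * Real.pi, ‖w (circleMap 0 R θ)‖) ≤ 1 := by
        rw [← inv_mul_cancel₀ (ne_of_gt Real.two_pi_pos)]
        exact mul_le_mul_of_nonneg_left hint h2pi.le
      nlinarith [pow_nonneg (inv_nonneg.mpr h0.le) n]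
    calc ‖iteratedDeriv n w 0‖
        = (n.factorial : ℝ) * ‖cauchyPowerSeries w 0 R n fun _ => (1:ℂ)‖ := by
          rw [hit]
          rw [nsmul_eq_mul]
          rw [norm_mul]
          simp
      _ ≤ (n.factorial : ℝ) * (ρ⁻¹) ^ n := by
          apply mul_le_mul_of_nonneg_left (hle1.trans hnorm) (by positivity)
  have hten : Tendsto (fun ρ : ℝ => (n.factorial : ℝ) * (ρ⁻¹) ^ n)
      (nhdsWithin 1 (Set.Iio 1)) (nhds ((n.factorial : ℝ))) := by
    have hc : ContinuousAt (fun ρ : ℝ => (n.factorial : ℝ) * (ρ⁻¹) ^ n) 1 := by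
      have : ContinuousAt (fun ρ : ℝ => ρ⁻¹) 1 := continuousAt_inv₀ one_ne_zero
      exact (continuousAt_const.mul ((this.pow n)))
    have := hc.tendsto
    simp only [inv_one, one_pow, mul_one] at this
    exact this.mono_left nhdsWithin_le_nhds
  refine ge_of_tendsto hten ?_
  have hIoo : Set.Ioo (0:ℝ) 1 ∈ nhdsWithin (1:ℝ) (Set.Iio 1) :=
    Ioo_mem_nhdsLT_of_mem ⟨one_pos, le_refl 1⟩
  filter_upwards [hIoo] with ρ hρ
  exact key ρ hρ.1 hρ.2

end FeketeSzego

/-- For f ∈ 𝒩^{μ,λ}_Σ(φ), |a₃ - a₂²| ≤ B₁/(2λ+μ). -/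
theorem stmt_11 (μ lam B₁ B₂ : ℝ) (hlam : 1 ≤ lam) (hμ : 0 ≤ μ)
    (φ f g : ℂ → ℂ)
    (hφa : AnalyticOnNhd ℂ φ (ball 0 1)) (hφ0 : φ 0 = 1)
    (hφre : ∀ z ∈ ball (0:ℂ) 1, 0 < (φ z).re)
    (hφreal : ∀ n, (coeff φ n).im = 0)
    (hB1 : coeff φ 1 = (B₁:ℂ)) (hB2 : coeff φ 2 = (B₂:ℂ)) (hB1pos : 0 < B₁)
    (hmem : MemN μ lam φ f g) :
    ‖coeff f 3 - (coeff f 2)^2‖ ≤ B₁ / (2*lam+μ) := by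
  obtain ⟨⟨hfa, hfinj, hf0, hf1, hga, hginj, hgf, hfg⟩,
    ⟨r, ⟨hra, hr0, hrb⟩, hrs⟩, ⟨s, ⟨hsa, hs0, hsb⟩, hss⟩⟩ := hmem
  have h01 : (0:ℂ) ∈ ball (0:ℂ) 1 := mem_ball_self one_pos
  have hfA : AnalyticAt ℂ f 0 := hfa 0 h01
  have hgA : AnalyticAt ℂ g 0 := hga 0 h01
  have hφA : AnalyticAt ℂ φ 0 := hφa 0 h01
  have hrA : AnalyticAt ℂ r 0 := hra 0 h01
  have hsA : AnalyticAt ℂ s 0 := hsa 0 h01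
  have hg0 : g 0 = 0 := by have h := hgf.self_of_nhds; rwa [hf0] at h
  obtain ⟨hg1, hg2, hg3⟩ := FeketeSzego.inv_coeffs hfA hgA hf0 hf1 hgf
  have hev : ∀ᶠ z in nhds (0:ℂ), z ≠ 0 → Nexpr μ lam f z = φ (r z) := by
    filter_upwards [ball_mem_nhds (0:ℂ) one_pos] with z hz
    exact hrs z hz
  have hev' : ∀ᶠ z in nhds (0:ℂ), z ≠ 0 → Nexpr μ lam g z = φ (s z) := by
    filter_upwards [ball_mem_nhds (0:ℂ) one_pos] with z hz
    exact hss z hz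
  obtain ⟨E1f, E2f⟩ := FeketeSzego.subord μ lam φ f r hfA hf0 hf1 hφA hφ0 hrA hr0 hev
  obtain ⟨E1g, E2g⟩ := FeketeSzego.subord μ lam φ g s hgA hg0 hg1 hφA hφ0 hsA hs0 hev'
  have hB1' : deriv φ 0 = (B₁:ℂ) := by
    have h := hB1
    simpa [coeff, iteratedDeriv_one] using h
  have hit2 : ∀ F : ℂ → ℂ, iteratedDeriv 2 F = deriv (deriv F) := by
    intro F; rw [iteratedDeriv_succ, iteratedDeriv_one]
  have hit3 : iteratedDeriv 3 f = deriv (deriv (deriv f)) := by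
    rw [iteratedDeriv_succ, hit2]
  have hB2' : deriv (deriv φ) 0 = 2*(B₂:ℂ) := by
    have h := hB2
    simp only [coeff, hit2] at h
    norm_num at h
    linear_combination 2 * h
  have hB1ne : (B₁:ℂ) ≠ 0 := Complex.ofReal_ne_zero.mpr hB1pos.ne'
  have hu1 : deriv r 0 = - deriv s 0 := by
    rw [hB1'] at E1f E1g
    rw [hg2] at E1g
    have hsum : (B₁:ℂ) * (deriv r 0 + deriv s 0) = 0 := by linear_combination -E1f - E1g
    rcases mul_eq_zero.mp hsum with h | h
    · exact absurd h hB1ne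
    · linear_combination h
  have hc2 : coeff f 2 = deriv (deriv f) 0 / 2 := by
    simp only [coeff, hit2]; norm_num
  have hc3 : coeff f 3 = deriv (deriv (deriv f)) 0 / 6 := by
    simp only [coeff, hit3]; norm_num [Nat.factorial]
  have key : (((2*(μ+2*lam):ℝ)):ℂ) * (coeff f 3 - (coeff f 2)^2)
      = ((B₁:ℝ):ℂ) * ((deriv (deriv r) 0 - deriv (deriv s) 0)/2) := by
    rw [hB1', hB2'] at E2f E2g
    rw [hg2, hg3] at E2g
    rw [hu1] at E2f
    rw [hc3, hc2]
    push_cast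
    linear_combination E2f - E2g
  have hPpos : (0:ℝ) < 2*(μ+2*lam) := by nlinarith
  have habs := congrArg (‖·‖) key
  rw [norm_mul, norm_mul, Complex.norm_real, Complex.norm_real,
    Real.norm_of_nonneg hPpos.le, Real.norm_of_nonneg hB1pos.le] at habs
  have hr2 : ‖deriv (deriv r) 0‖ ≤ 2 := by
    have h := FeketeSzego.schwarz_bound hra hrb 2
    rw [hit2] at h
    norm_num at h
    exact h
  have hs2 : ‖deriv (deriv s) 0‖ ≤ 2 := by
    have h := FeketeSzego.schwarz_bound hsa hsb 2
    rw [hit2] at h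
    norm_num at h
    exact h
  have hbnd : ‖(deriv (deriv r) 0 - deriv (deriv s) 0)/2‖ ≤ 2 := by
    rw [norm_div]
    have h2 : ‖(2:ℂ)‖ = 2 := by norm_num
    rw [h2]
    have h := norm_sub_le (deriv (deriv r) 0) (deriv (deriv s) 0)
    linarith
  have hD : ‖coeff f 3 - (coeff f 2)^2‖ ≤ B₁ * 2 / (2*(μ+2*lam)) := by
    rw [le_div_iff₀ hPpos]
    calc ‖coeff f 3 - (coeff f 2)^2‖ * (2*(μ+2*lam))
        = B₁ * ‖(deriv (deriv r) 0 - deriv (deriv s) 0)/2‖ := by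
          rw [mul_comm]; exact habs
      _ ≤ B₁ * 2 := mul_le_mul_of_nonneg_left hbnd hB1pos.le
  have heq2 : B₁ * 2 / (2*(μ+2*lam)) = B₁ / (2*lam+μ) := by
    rw [div_eq_div_iff hPpos.ne' (by nlinarith : (0:ℝ) < 2*lam+μ).ne']
    ring
  rwa [heq2] at hD
end

section
/- If f is bi-starlike of Ma-Minda type with respect to φ (f ∈ 𝒮*_Σ(φ)), then |a₃ − a₂²| ≤ B₁/2. -/
open Complex Metric

def MemStar (φ f g : ℂ → ℂ) : Prop :=
  BiUnivalent f g ∧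
  (∃ r, IsSchwarz r ∧ ∀ z ∈ ball (0:ℂ) 1, z ≠ 0 → z * deriv f z / f z = φ (r z)) ∧
  (∃ s, IsSchwarz s ∧ ∀ w ∈ ball (0:ℂ) 1, w ≠ 0 → w * deriv g w / g w = φ (s w))

open Filter Topology

private lemma aAt_deriv {f : ℂ → ℂ} {x : ℂ} (h : AnalyticAt ℂ f x) : AnalyticAt ℂ (deriv f) x := by
  obtain ⟨s, hs, h2⟩ := h.eventually_analyticAt.exists_mem
  exact AnalyticOnNhd.deriv (fun y hy => h2 y hy) x (mem_of_mem_nhds hs)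

private lemma eventually_diff {f : ℂ → ℂ} (h : AnalyticAt ℂ f 0) :
    ∀ᶠ z in 𝓝 (0:ℂ), DifferentiableAt ℂ f z :=
  h.eventually_analyticAt.mono fun _ hz => hz.differentiableAt

private lemma eventually_diff_comp {p w : ℂ → ℂ} (hw : AnalyticAt ℂ w 0)
    (hp : AnalyticAt ℂ p (w 0)) :
    ∀ᶠ z in 𝓝 (0:ℂ), DifferentiableAt ℂ p (w z) :=
  (hw.continuousAt.eventually hp.eventually_analyticAt).mono fun _ hz => hz.differentiableAt

private lemma HasDerivAt.comp' {p w : ℂ → ℂ} {z a b : ℂ} (hp : HasDerivAt p a (w z))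
    (hw : HasDerivAt w b z) : HasDerivAt (fun z => p (w z)) (a * b) z :=
  hp.comp z hw

private lemma schwarz_bound {w : ℂ → ℂ} (hw : IsSchwarz w) :
    ‖deriv (deriv w) 0‖ ≤ 2 := by
  obtain ⟨ha, h0, hb⟩ := hw
  have hval : deriv (deriv w) 0 = iteratedDeriv 2 w 0 := by
    rw [iteratedDeriv_succ, iteratedDeriv_one]
  rw [hval]
  have key : ∀ ρ : ℝ, ρ ∈ Set.Ioo (0:ℝ) 1 → ‖iteratedDeriv 2 w 0‖ ≤ 2 * (ρ⁻¹)^2 := by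
    rintro ρ ⟨hρ0, hρ1⟩
    have hsub : closedBall (0:ℂ) ρ ⊆ ball 0 1 := closedBall_subset_ball hρ1
    set R : NNReal := ⟨ρ, hρ0.le⟩ with hR
    have hdiff : DifferentiableOn ℂ w (closedBall 0 (R:ℝ)) :=
      (ha.mono hsub).differentiableOn
    have hps : HasFPowerSeriesOnBall w (cauchyPowerSeries w 0 R) 0 R :=
      hdiff.hasFPowerSeriesOnBall (by exact_mod_cast hρ0)
    have h1 : iteratedDeriv 2 w 0 = (2:ℕ) • (cauchyPowerSeries w 0 R 2 fun _ => (1:ℂ)) := by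
      have h2 := hps.factorial_smul (1:ℂ) 2
      rw [iteratedDeriv_eq_iteratedFDeriv, ← h2]
      norm_num [Nat.factorial]
    have hnorm1 : ‖iteratedDeriv 2 w 0‖ ≤ 2 * ‖cauchyPowerSeries w 0 R 2‖ := by
      rw [h1, nsmul_eq_mul]
      rw [norm_mul]
      simp only [Nat.cast_ofNat, Complex.norm_ofNat]
      gcongr
      calc ‖cauchyPowerSeries w 0 R 2 fun _ => (1:ℂ)‖
          ≤ ‖cauchyPowerSeries w 0 R 2‖ * ∏ _i : Fin 2, ‖(1:ℂ)‖ :=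
            (cauchyPowerSeries w 0 R 2).le_opNorm _
        _ = ‖cauchyPowerSeries w 0 R 2‖ := by simp
    have hint : (∫ θ in (0:ℝ)..2 * Real.pi, ‖w (circleMap 0 R θ)‖) ≤ 2 * Real.pi := by
      have hmaps : ∀ θ : ℝ, circleMap 0 (R:ℝ) θ ∈ ball (0:ℂ) 1 := by
        intro θ
        rw [mem_ball_zero_iff, norm_circleMap_zero]
        rw [abs_of_pos (by exact_mod_cast hρ0)]
        exact_mod_cast hρ1
      have hcont : ContinuousOn (fun θ : ℝ => ‖w (circleMap 0 (R:ℝ) θ)‖)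
          (Set.uIcc 0 (2 * Real.pi)) := by
        apply ContinuousOn.norm
        exact (ha.continuousOn.comp (continuous_circleMap 0 (R:ℝ)).continuousOn
          fun θ _ => hmaps θ)
      calc (∫ θ in (0:ℝ)..2 * Real.pi, ‖w (circleMap 0 (R:ℝ) θ)‖)
          ≤ ∫ _θ in (0:ℝ)..2 * Real.pi, (1:ℝ) := by
            apply intervalIntegral.integral_mono_on Real.two_pi_pos.le
              (hcont.intervalIntegrable) intervalIntegrable_const
            intro θ _
            exact le_of_lt (by simpa using hb _ (hmaps θ))
        _ = 2 * Real.pi := by simp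
    have hnorm2 := norm_cauchyPowerSeries_le w 0 (R:ℝ) 2
    have hπ : (0:ℝ) < 2 * Real.pi := Real.two_pi_pos
    have habsR : |(R:ℝ)| = ρ := abs_of_pos hρ0
    calc ‖iteratedDeriv 2 w 0‖ ≤ 2 * ‖cauchyPowerSeries w 0 R 2‖ := hnorm1
      _ ≤ 2 * (((2 * Real.pi)⁻¹ * ∫ θ in (0:ℝ)..2 * Real.pi, ‖w (circleMap 0 (R:ℝ) θ)‖)
            * |(R:ℝ)|⁻¹ ^ 2) := by gcongr
      _ ≤ 2 * (((2 * Real.pi)⁻¹ * (2 * Real.pi)) * |(R:ℝ)|⁻¹ ^ 2) := by gcongr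
      _ = 2 * (ρ⁻¹)^2 := by
            rw [habsR, inv_mul_cancel₀ hπ.ne']
            ring
  have lim : Tendsto (fun ρ : ℝ => 2 * (ρ⁻¹)^2) (𝓝[<] (1:ℝ)) (𝓝 2) := by
    have hc : ContinuousAt (fun ρ : ℝ => 2 * (ρ⁻¹)^2) 1 :=
      continuousAt_const.mul ((continuousAt_inv₀ one_ne_zero).pow 2)
    have := hc.tendsto.mono_left (nhdsWithin_le_nhds (s := Set.Iio (1:ℝ)))
    simpa using this
  exact ge_of_tendsto lim (eventually_of_mem
    (Ioo_mem_nhdsLT_of_mem ⟨zero_lt_one, le_refl 1⟩) key)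

private lemma main_rel {φ h w : ℂ → ℂ}
    (hφ : AnalyticAt ℂ φ 0) (hh : AnalyticAt ℂ h 0) (hw : AnalyticAt ℂ w 0)
    (hw0 : w 0 = 0) (hh0 : h 0 = 0) (hh1 : deriv h 0 = 1) (hφ0 : φ 0 = 1)
    (heq : (fun z => z * deriv h z) =ᶠ[𝓝 (0:ℂ)] fun z => h z * φ (w z)) :
    deriv (deriv h) 0 = 2 * (deriv φ 0 * deriv w 0) ∧
    2 * deriv (deriv (deriv h)) 0 = 3 * deriv (deriv h) 0 * (deriv φ 0 * deriv w 0)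
      + 3 * (deriv (deriv φ) 0 * (deriv w 0) ^ 2 + deriv φ 0 * deriv (deriv w) 0) := by
  have hh1a := aAt_deriv hh
  have hh2a := aAt_deriv hh1a
  have hh3a := aAt_deriv hh2a
  have hw1a := aAt_deriv hw
  have hφw : AnalyticAt ℂ φ (w 0) := by rw [hw0]; exact hφ
  have hφ1w : AnalyticAt ℂ (deriv φ) (w 0) := by rw [hw0]; exact aAt_deriv hφ
  have hP : AnalyticAt ℂ (fun z => φ (w z)) 0 := hφw.comp hw
  have hP1a := aAt_deriv hP
  have hP2a := aAt_deriv hP1a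
  -- P chain
  have eP1 : deriv (fun z => φ (w z)) =ᶠ[𝓝 (0:ℂ)] fun z => deriv φ (w z) * deriv w z := by
    filter_upwards [eventually_diff hw, eventually_diff_comp hw hφw] with z b1 b2
    exact (HasDerivAt.comp' b2.hasDerivAt b1.hasDerivAt).deriv
  have eP2 : deriv (fun z => deriv φ (w z) * deriv w z) =ᶠ[𝓝 (0:ℂ)]
      fun z => (deriv (deriv φ) (w z) * deriv w z) * deriv w z
        + deriv φ (w z) * deriv (deriv w) z := by
    filter_upwards [eventually_diff hw, eventually_diff hw1a,
      eventually_diff_comp hw hφ1w] with z b1 b2 b3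
    exact ((HasDerivAt.comp' b3.hasDerivAt b1.hasDerivAt).mul b2.hasDerivAt).deriv
  have vP1 : deriv (fun z => φ (w z)) 0 = deriv φ 0 * deriv w 0 := by
    have e := eP1.eq_of_nhds
    rw [e, hw0]
  have vP2 : deriv (deriv (fun z => φ (w z))) 0
      = deriv (deriv φ) 0 * (deriv w 0) ^ 2 + deriv φ 0 * deriv (deriv w) 0 := by
    have e := (eP1.deriv.trans eP2).eq_of_nhds
    rw [e, hw0]; ring
  -- F chain
  have eF1 : deriv (fun z => z * deriv h z) =ᶠ[𝓝 (0:ℂ)]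
      fun z => deriv h z + z * deriv (deriv h) z := by
    filter_upwards [eventually_diff hh1a] with z b1
    exact ((hasDerivAt_id' z).mul b1.hasDerivAt).deriv.trans (by ring)
  have eF2 : deriv (fun z => deriv h z + z * deriv (deriv h) z) =ᶠ[𝓝 (0:ℂ)]
      fun z => 2 * deriv (deriv h) z + z * deriv (deriv (deriv h)) z := by
    filter_upwards [eventually_diff hh1a, eventually_diff hh2a] with z b1 b2
    exact (b1.hasDerivAt.add ((hasDerivAt_id' z).mul b2.hasDerivAt)).deriv.trans (by ring)
  have eF3 : deriv (fun z => 2 * deriv (deriv h) z + z * deriv (deriv (deriv h)) z) =ᶠ[𝓝 (0:ℂ)]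
      fun z => 3 * deriv (deriv (deriv h)) z + z * deriv (deriv (deriv (deriv h))) z := by
    filter_upwards [eventually_diff hh2a, eventually_diff hh3a] with z b2 b3
    exact ((b2.hasDerivAt.const_mul (2:ℂ)).add
      ((hasDerivAt_id' z).mul b3.hasDerivAt)).deriv.trans (by ring)
  have vF2 : deriv (deriv (fun z => z * deriv h z)) 0 = 2 * deriv (deriv h) 0 := by
    have e := (eF1.deriv.trans eF2).eq_of_nhds
    rw [e]; ring
  have vF3 : deriv (deriv (deriv (fun z => z * deriv h z))) 0
      = 3 * deriv (deriv (deriv h)) 0 := by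
    have e := (eF1.deriv.deriv.trans (eF2.deriv.trans eF3)).eq_of_nhds
    rw [e]; ring
  -- G chain
  have eG1 : deriv (fun z => h z * φ (w z)) =ᶠ[𝓝 (0:ℂ)]
      fun z => deriv h z * φ (w z) + h z * deriv (fun z => φ (w z)) z := by
    filter_upwards [eventually_diff hh, eventually_diff hP] with z b0 p0
    exact (b0.hasDerivAt.mul p0.hasDerivAt).deriv.trans (by ring)
  have eG2 : deriv (fun z => deriv h z * φ (w z) + h z * deriv (fun z => φ (w z)) z)
      =ᶠ[𝓝 (0:ℂ)] fun z => deriv (deriv h) z * φ (w z)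
        + 2 * (deriv h z * deriv (fun z => φ (w z)) z)
        + h z * deriv (deriv (fun z => φ (w z))) z := by
    filter_upwards [eventually_diff hh, eventually_diff hh1a, eventually_diff hP,
      eventually_diff hP1a] with z b0 b1 p0 p1
    exact ((b1.hasDerivAt.mul p0.hasDerivAt).add
      (b0.hasDerivAt.mul p1.hasDerivAt)).deriv.trans (by ring)
  have eG3 : deriv (fun z => deriv (deriv h) z * φ (w z)
        + 2 * (deriv h z * deriv (fun z => φ (w z)) z)
        + h z * deriv (deriv (fun z => φ (w z))) z) =ᶠ[𝓝 (0:ℂ)]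
      fun z => deriv (deriv (deriv h)) z * φ (w z)
        + 3 * (deriv (deriv h) z * deriv (fun z => φ (w z)) z)
        + 3 * (deriv h z * deriv (deriv (fun z => φ (w z))) z)
        + h z * deriv (deriv (deriv (fun z => φ (w z)))) z := by
    filter_upwards [eventually_diff hh, eventually_diff hh1a, eventually_diff hh2a,
      eventually_diff hP, eventually_diff hP1a, eventually_diff hP2a] with z b0 b1 b2 p0 p1 p2
    exact (((b2.hasDerivAt.mul p0.hasDerivAt).add
      ((b1.hasDerivAt.mul p1.hasDerivAt).const_mul (2:ℂ))).add
      (b0.hasDerivAt.mul p2.hasDerivAt)).deriv.trans (by ring)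
  have vG2 : deriv (deriv (fun z => h z * φ (w z))) 0
      = deriv (deriv h) 0 + 2 * (deriv φ 0 * deriv w 0) := by
    have e := (eG1.deriv.trans eG2).eq_of_nhds
    rw [e]
    simp only [hw0, hφ0, hh0, hh1, vP1]
    ring
  have vG3 : deriv (deriv (deriv (fun z => h z * φ (w z)))) 0
      = deriv (deriv (deriv h)) 0 + 3 * (deriv (deriv h) 0 * (deriv φ 0 * deriv w 0))
        + 3 * (deriv (deriv φ) 0 * (deriv w 0) ^ 2 + deriv φ 0 * deriv (deriv w) 0) := by
    have e := (eG1.deriv.deriv.trans (eG2.deriv.trans eG3)).eq_of_nhds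
    rw [e]
    simp only [hw0, hφ0, hh0, hh1, vP1, vP2]
    ring
  have t2 := heq.deriv.deriv.eq_of_nhds
  rw [vF2, vG2] at t2
  have t3 := heq.deriv.deriv.deriv.eq_of_nhds
  rw [vF3, vG3] at t3
  exact ⟨by linear_combination t2, by linear_combination t3⟩

private lemma inv_rel {f g : ℂ → ℂ} (hf : AnalyticAt ℂ f 0) (hg : AnalyticAt ℂ g 0)
    (hf0 : f 0 = 0) (hf1 : deriv f 0 = 1)
    (hgf : ∀ᶠ z in 𝓝 (0:ℂ), g (f z) = z) :
    deriv g 0 = 1 ∧ deriv (deriv g) 0 = -deriv (deriv f) 0 ∧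
    deriv (deriv (deriv g)) 0
      = 3 * (deriv (deriv f) 0) ^ 2 - deriv (deriv (deriv f)) 0 := by
  have hf1a := aAt_deriv hf
  have hf2a := aAt_deriv hf1a
  have hf3a := aAt_deriv hf2a
  have hgw : AnalyticAt ℂ g (f 0) := by rw [hf0]; exact hg
  have hg1w : AnalyticAt ℂ (deriv g) (f 0) := by rw [hf0]; exact aAt_deriv hg
  have hg2w : AnalyticAt ℂ (deriv (deriv g)) (f 0) := by
    rw [hf0]; exact aAt_deriv (aAt_deriv hg)
  have hgf' : (fun z => g (f z)) =ᶠ[𝓝 (0:ℂ)] fun z => z := hgf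
  have eC1 : deriv (fun z => g (f z)) =ᶠ[𝓝 (0:ℂ)] fun z => deriv g (f z) * deriv f z := by
    filter_upwards [eventually_diff hf, eventually_diff_comp hf hgw] with z b1 b2
    exact (HasDerivAt.comp' b2.hasDerivAt b1.hasDerivAt).deriv
  have eC2 : deriv (fun z => deriv g (f z) * deriv f z) =ᶠ[𝓝 (0:ℂ)]
      fun z => (deriv (deriv g) (f z) * deriv f z) * deriv f z
        + deriv g (f z) * deriv (deriv f) z := by
    filter_upwards [eventually_diff hf, eventually_diff hf1a,
      eventually_diff_comp hf hg1w] with z b0 b1 q1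
    exact ((HasDerivAt.comp' q1.hasDerivAt b0.hasDerivAt).mul b1.hasDerivAt).deriv
  have eC3 : deriv (fun z => (deriv (deriv g) (f z) * deriv f z) * deriv f z
        + deriv g (f z) * deriv (deriv f) z) =ᶠ[𝓝 (0:ℂ)]
      fun z => deriv (deriv (deriv g)) (f z) * (deriv f z) ^ 3
        + 3 * (deriv (deriv g) (f z) * (deriv f z * deriv (deriv f) z))
        + deriv g (f z) * deriv (deriv (deriv f)) z := by
    filter_upwards [eventually_diff hf, eventually_diff hf1a, eventually_diff hf2a,
      eventually_diff_comp hf hg1w, eventually_diff_comp hf hg2w] with z b0 b1 b2 q1 q2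
    have t1 := ((HasDerivAt.comp' q2.hasDerivAt b0.hasDerivAt).mul b1.hasDerivAt).mul
      b1.hasDerivAt
    have t3 := (HasDerivAt.comp' q1.hasDerivAt b0.hasDerivAt).mul b2.hasDerivAt
    exact (t1.add t3).deriv.trans (by simp only [Pi.mul_apply]; ring)
  have hone : (fun z => deriv g (f z) * deriv f z) =ᶠ[𝓝 (0:ℂ)] fun _ => (1:ℂ) := by
    refine eC1.symm.trans (hgf'.deriv.trans ?_)
    rw [deriv_id'']
  have hg1 : deriv g 0 = 1 := by
    have e := hone.eq_of_nhds
    rw [hf0, hf1, mul_one] at e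
    exact e
  have e2 := (eC2.symm.trans (hone.deriv.trans (by rw [deriv_const']))).eq_of_nhds
  rw [hf0, hf1, hg1] at e2
  have hg2 : deriv (deriv g) 0 = -deriv (deriv f) 0 := by linear_combination e2
  have chain : deriv (deriv (fun z => deriv g (f z) * deriv f z)) =ᶠ[𝓝 (0:ℂ)]
      fun z => deriv (deriv (deriv g)) (f z) * (deriv f z) ^ 3
        + 3 * (deriv (deriv g) (f z) * (deriv f z * deriv (deriv f) z))
        + deriv g (f z) * deriv (deriv (deriv f)) z := eC2.deriv.trans eC3
  have chain2 : deriv (deriv (fun z => deriv g (f z) * deriv f z)) =ᶠ[𝓝 (0:ℂ)]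
      fun _ => (0:ℂ) := by
    refine hone.deriv.deriv.trans ?_
    rw [deriv_const', deriv_const']
  have e3 := (chain.symm.trans chain2).eq_of_nhds
  rw [hf0, hf1, hg1] at e3
  exact ⟨hg1, hg2, by linear_combination e3 - 3 * deriv (deriv f) 0 * hg2⟩

private lemma build_heq {φ h w : ℂ → ℂ}
    (hφre : ∀ z ∈ ball (0:ℂ) 1, 0 < (φ z).re)
    (hw : IsSchwarz w) (h0 : h 0 = 0)
    (hrel : ∀ z ∈ ball (0:ℂ) 1, z ≠ 0 → z * deriv h z / h z = φ (w z)) :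
    (fun z => z * deriv h z) =ᶠ[𝓝 (0:ℂ)] fun z => h z * φ (w z) := by
  filter_upwards [isOpen_ball.eventually_mem (mem_ball_self one_pos)] with z hz
  rcases eq_or_ne z 0 with rfl | hne
  · simp [h0]
  · have hwz : w z ∈ ball (0:ℂ) 1 := by
      rw [mem_ball_zero_iff]
      exact hw.2.2 z hz
    have hrel' := hrel z hz hne
    have hneq : h z ≠ 0 := by
      intro h0'
      rw [h0', div_zero] at hrel'
      have hpos := hφre _ hwz
      rw [← hrel'] at hpos
      simp at hpos
    rw [div_eq_iff hneq] at hrel'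
    rw [hrel']; ring

/-- For bi-starlike functions of Ma–Minda type, |a₃ - a₂²| ≤ B₁/2. -/
theorem stmt_15 (B₁ B₂ : ℝ) (φ f g : ℂ → ℂ)
    (hφa : AnalyticOnNhd ℂ φ (ball 0 1)) (hφ0 : φ 0 = 1)
    (hφre : ∀ z ∈ ball (0:ℂ) 1, 0 < (φ z).re)
    (hφreal : ∀ n, (coeff φ n).im = 0)
    (hB1 : coeff φ 1 = (B₁:ℂ)) (hB2 : coeff φ 2 = (B₂:ℂ)) (hB1pos : 0 < B₁)
    (hmem : MemStar φ f g) :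
    ‖coeff f 3 - (coeff f 2)^2‖ ≤ B₁ / 2 := by
  obtain ⟨⟨hfa, hfinj, hf0, hf1, hga, hginj, hgf, hfg⟩, ⟨r, hr, hrrel⟩, ⟨s, hs, hsrel⟩⟩ := hmem
  have h01 : (0:ℂ) ∈ ball (0:ℂ) 1 := mem_ball_self one_pos
  have hφ0a : AnalyticAt ℂ φ 0 := hφa 0 h01
  have hf0a : AnalyticAt ℂ f 0 := hfa 0 h01
  have hg0a : AnalyticAt ℂ g 0 := hga 0 h01
  have hr0a : AnalyticAt ℂ r 0 := hr.1 0 h01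
  have hs0a : AnalyticAt ℂ s 0 := hs.1 0 h01
  have hg0 : g 0 = 0 := by
    have := hgf.self_of_nhds
    rwa [hf0] at this
  obtain ⟨hg1, hg2, hg3⟩ := inv_rel hf0a hg0a hf0 hf1 hgf
  have heqf := build_heq hφre hr hf0 hrrel
  have heqg := build_heq hφre hs hg0 hsrel
  obtain ⟨Mf1, Mf2⟩ := main_rel hφ0a hf0a hr0a hr.2.1 hf0 hf1 hφ0 heqf
  obtain ⟨Mg1, Mg2⟩ := main_rel hφ0a hg0a hs0a hs.2.1 hg0 hg1 hφ0 heqg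
  have dφ1 : deriv φ 0 = (B₁:ℂ) := by
    have h := hB1
    simp only [coeff, iteratedDeriv_one, Nat.factorial_one, Nat.cast_one, div_one] at h
    exact h
  have dφ2 : deriv (deriv φ) 0 = 2 * (B₂:ℂ) := by
    have h := hB2
    simp only [coeff] at h
    rw [iteratedDeriv_succ, iteratedDeriv_one] at h
    norm_num [Nat.factorial] at h
    linear_combination 2 * h
  rw [dφ1] at Mf1 Mg1
  rw [dφ1, dφ2] at Mf2 Mg2
  have hB1ne : (B₁:ℂ) ≠ 0 := by exact_mod_cast hB1pos.ne'
  have hd1 : deriv s 0 = -deriv r 0 := by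
    apply mul_left_cancel₀ hB1ne
    linear_combination (-Mg1 + hg2 - Mf1) / 2
  rw [hd1] at Mg2
  have cf2 : coeff f 2 = deriv (deriv f) 0 / 2 := by
    simp only [coeff]
    rw [iteratedDeriv_succ, iteratedDeriv_one]
    norm_num [Nat.factorial]
  have cf3 : coeff f 3 = deriv (deriv (deriv f)) 0 / 6 := by
    simp only [coeff]
    rw [iteratedDeriv_succ, iteratedDeriv_succ, iteratedDeriv_one]
    norm_num [Nat.factorial]
  have key : coeff f 3 - (coeff f 2)^2
      = (B₁:ℂ) * (deriv (deriv r) 0 - deriv (deriv s) 0) / 8 := by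
    rw [cf2, cf3]
    linear_combination (Mf2 - Mg2) / 24 + (B₁:ℂ) * deriv r 0 * hg2 / 8 + hg3 / 12
  rw [key]
  have hγ := schwarz_bound hr
  have hδ := schwarz_bound hs
  have h4 : ‖deriv (deriv r) 0 - deriv (deriv s) 0‖ ≤ 4 := by
    calc ‖deriv (deriv r) 0 - deriv (deriv s) 0‖
        ≤ ‖deriv (deriv r) 0‖ + ‖deriv (deriv s) 0‖ := by
          exact norm_sub_le _ _
      _ ≤ 2 + 2 := add_le_add hγ hδ
      _ = 4 := by norm_num
  rw [norm_div, norm_mul, Complex.norm_real, Real.norm_of_nonneg hB1pos.le]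
  have h8 : ‖(8:ℂ)‖ = 8 := by norm_num
  rw [h8]
  rw [div_le_div_iff₀ (by norm_num) (by norm_num)]
  nlinarith [mul_le_mul_of_nonneg_left h4 hB1pos.le]
end

section
/- If f ∈ ℬ_Σ(β, λ), i.e., (1−λ)(f(z)/z) + λf'(z) ≺ ((1+z)/(1−z))^β and likewise for f⁻¹, with λ ≥ 1, 0 < β ≤ 1, then |a₃| ≤ 2β/(2λ+1) and |a₃ − a₂²| ≤ 2β/(2λ+1). -/
open Complex Metric Filter Set
open scoped Topology

def MemB (lam β : ℝ) (f g : ℂ → ℂ) : Prop :=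
  BiUnivalent f g ∧
  (∃ r, IsSchwarz r ∧ ∀ z ∈ ball (0:ℂ) 1, z ≠ 0 →
    (1 - (lam:ℂ)) * (f z / z) + (lam:ℂ) * deriv f z = ((1 + r z) / (1 - r z)) ^ (β:ℂ)) ∧
  (∃ s, IsSchwarz s ∧ ∀ w ∈ ball (0:ℂ) 1, w ≠ 0 →
    (1 - (lam:ℂ)) * (g w / w) + (lam:ℂ) * deriv g w = ((1 + s w) / (1 - s w)) ^ (β:ℂ))

private lemma aderiv {u : ℂ → ℂ} {x : ℂ} (h : AnalyticAt ℂ u x) : AnalyticAt ℂ (deriv u) x := by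
  obtain ⟨s, hs, h2⟩ := h.eventually_analyticAt.exists_mem
  exact (AnalyticOnNhd.deriv (fun y hy => h2 y hy)) x (mem_of_mem_nhds hs)

private lemma evdiff {u : ℂ → ℂ} {x : ℂ} (h : AnalyticAt ℂ u x) :
    ∀ᶠ z in 𝓝 x, DifferentiableAt ℂ u z := by
  filter_upwards [h.eventually_analyticAt] with z hz using hz.differentiableAt

private lemma ev_deriv_add {u v : ℂ → ℂ} {x : ℂ} (hu : AnalyticAt ℂ u x) (hv : AnalyticAt ℂ v x) :
    deriv (fun z => u z + v z) =ᶠ[𝓝 x] fun z => deriv u z + deriv v z := by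
  filter_upwards [evdiff hu, evdiff hv] with z h1 h2 using deriv_add h1 h2

private lemma ev_deriv_mul {u v : ℂ → ℂ} {x : ℂ} (hu : AnalyticAt ℂ u x) (hv : AnalyticAt ℂ v x) :
    deriv (fun z => u z * v z) =ᶠ[𝓝 x] fun z => deriv u z * v z + u z * deriv v z := by
  filter_upwards [evdiff hu, evdiff hv] with z h1 h2 using deriv_mul h1 h2

private lemma ev_deriv_cmul (c : ℂ) {u : ℂ → ℂ} {x : ℂ} (hu : AnalyticAt ℂ u x) :
    deriv (fun z => c * u z) =ᶠ[𝓝 x] fun z => c * deriv u z := by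
  filter_upwards [evdiff hu] with z h1 using deriv_const_mul c h1

private lemma ev_deriv_comp {u v : ℂ → ℂ} {x : ℂ} (hv : AnalyticAt ℂ v x) (hu : AnalyticAt ℂ u (v x)) :
    deriv (fun z => u (v z)) =ᶠ[𝓝 x] fun z => deriv u (v z) * deriv v z := by
  filter_upwards [evdiff hv, hv.continuousAt.eventually hu.eventually_analyticAt] with z h1 h2
  exact deriv_comp z h2.differentiableAt h1

private lemma itd2_eq (u : ℂ → ℂ) : iteratedDeriv 2 u = deriv (deriv u) := by
  rw [show (2:ℕ) = 1+1 from rfl, iteratedDeriv_succ, iteratedDeriv_one]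

private lemma itd3_eq (u : ℂ → ℂ) : iteratedDeriv 3 u = deriv (deriv (deriv u)) := by
  rw [show (3:ℕ) = 2+1 from rfl, iteratedDeriv_succ, itd2_eq]

private lemma comp_derivs {u v : ℂ → ℂ} (hv : AnalyticAt ℂ v 0) (hu : AnalyticAt ℂ u (v 0)) :
    deriv (fun z => u (v z)) 0 = deriv u (v 0) * deriv v 0 ∧
    iteratedDeriv 2 (fun z => u (v z)) 0
      = iteratedDeriv 2 u (v 0) * (deriv v 0)^2 + deriv u (v 0) * iteratedDeriv 2 v 0 ∧
    iteratedDeriv 3 (fun z => u (v z)) 0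
      = iteratedDeriv 3 u (v 0) * (deriv v 0)^3
        + 3 * iteratedDeriv 2 u (v 0) * deriv v 0 * iteratedDeriv 2 v 0
        + deriv u (v 0) * iteratedDeriv 3 v 0 := by
  have hu1 : AnalyticAt ℂ (deriv u) (v 0) := aderiv hu
  have hu2 : AnalyticAt ℂ (deriv (deriv u)) (v 0) := aderiv hu1
  have hv1 : AnalyticAt ℂ (deriv v) 0 := aderiv hv
  have hv2 : AnalyticAt ℂ (deriv (deriv v)) 0 := aderiv hv1
  have hu1c : AnalyticAt ℂ (fun z => deriv u (v z)) 0 := hu1.comp hv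
  have hu2c : AnalyticAt ℂ (fun z => deriv (deriv u) (v z)) 0 := hu2.comp hv
  have e1 : deriv (fun z => u (v z)) =ᶠ[𝓝 0] fun z => deriv u (v z) * deriv v z :=
    ev_deriv_comp hv hu
  have e1' : deriv (fun z => deriv u (v z)) =ᶠ[𝓝 0] fun z => deriv (deriv u) (v z) * deriv v z :=
    ev_deriv_comp hv hu1
  -- second derivative as an eventual equality
  have e2 : deriv (deriv (fun z => u (v z))) =ᶠ[𝓝 0]
      fun z => deriv (deriv u) (v z) * deriv v z * deriv v z + deriv u (v z) * deriv (deriv v) z := by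
    refine e1.deriv.trans ?_
    refine (ev_deriv_mul hu1c hv1).trans ?_
    filter_upwards [e1'] with z hz
    rw [hz]
  refine ⟨e1.self_of_nhds, ?_, ?_⟩
  · simp only [itd2_eq]
    rw [e2.self_of_nhds]
    ring
  · simp only [itd3_eq, itd2_eq]
    rw [e2.deriv_eq]
    -- differentiate the explicit second derivative at 0
    have hA : AnalyticAt ℂ (fun z => deriv (deriv u) (v z) * deriv v z * deriv v z) 0 :=
      (hu2c.mul hv1).mul hv1
    have hB : AnalyticAt ℂ (fun z => deriv u (v z) * deriv (deriv v) z) 0 := hu1c.mul hv2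
    rw [deriv_fun_add hA.differentiableAt hB.differentiableAt]
    rw [deriv_fun_mul (c := fun z => deriv (deriv u) (v z) * deriv v z) (d := deriv v)
      (hu2c.mul hv1).differentiableAt hv1.differentiableAt]
    rw [deriv_fun_mul hu2c.differentiableAt hv1.differentiableAt]
    have e2' : deriv (fun z => deriv (deriv u) (v z)) 0 = deriv (deriv (deriv u)) (v 0) * deriv v 0 :=
      (ev_deriv_comp hv hu2).self_of_nhds
    rw [deriv_fun_mul hu1c.differentiableAt hv2.differentiableAt, e2',
      (ev_deriv_comp hv hu1).self_of_nhds]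
    ring

private lemma idmul_derivs {u : ℂ → ℂ} (hu : AnalyticAt ℂ u 0) :
    iteratedDeriv 2 (fun z => z * u z) 0 = 2 * deriv u 0 ∧
    iteratedDeriv 3 (fun z => z * u z) 0 = 3 * iteratedDeriv 2 u 0 := by
  have hu1 : AnalyticAt ℂ (deriv u) 0 := aderiv hu
  have hu2 : AnalyticAt ℂ (deriv (deriv u)) 0 := aderiv hu1
  have e1 : deriv (fun z => z * u z) =ᶠ[𝓝 0] fun z => u z + z * deriv u z := by
    refine (ev_deriv_mul (analyticAt_id) hu).trans ?_
    filter_upwards with z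
    simp
  have e2 : deriv (deriv (fun z => z * u z)) =ᶠ[𝓝 0]
      fun z => deriv u z + (deriv u z + z * deriv (deriv u) z) := by
    refine e1.deriv.trans ?_
    filter_upwards [hu.eventually_analyticAt, hu1.eventually_analyticAt] with z h1 h2
    rw [deriv_fun_add (f := u) (g := fun z => z * deriv u z) h1.differentiableAt (differentiableAt_fun_id.mul h2.differentiableAt),
        deriv_fun_mul differentiableAt_fun_id h2.differentiableAt]
    simp
  constructor
  · simp only [itd2_eq]
    rw [e2.self_of_nhds]
    simp [two_mul]
  · simp only [itd3_eq, itd2_eq]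
    rw [e2.deriv_eq]
    rw [deriv_fun_add (f := deriv u) (g := fun z => deriv u z + z * deriv (deriv u) z) hu1.differentiableAt
        (hu1.differentiableAt.add (differentiableAt_fun_id.mul hu2.differentiableAt)),
      deriv_fun_add (f := deriv u) (g := fun z => z * deriv (deriv u) z) hu1.differentiableAt (differentiableAt_fun_id.mul hu2.differentiableAt),
      deriv_fun_mul differentiableAt_fun_id hu2.differentiableAt]
    simp
    ring

private lemma one_sub_ne {w : ℂ} (hw : ‖w‖ < 1) : (1 : ℂ) - w ≠ 0 := by
  intro h
  have : w = 1 := by linear_combination -h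
  rw [this] at hw; simp at hw

private lemma base_slit {w : ℂ} (hw : ‖w‖ < 1) :
    (1 + w) / (1 - w) ∈ Complex.slitPlane := by
  have h1 : (1 : ℂ) - w ≠ 0 := one_sub_ne hw
  left
  rw [Complex.div_re, ← add_div]
  have hnum : (1 + w).re * (1 - w).re + (1 + w).im * (1 - w).im = 1 - Complex.normSq w := by
    simp [Complex.normSq_apply]; ring
  rw [hnum]
  have h2 : Complex.normSq w < 1 := by
    have := Complex.sq_norm w
    nlinarith [norm_nonneg w]
  exact div_pos (by linarith) (Complex.normSq_pos.mpr h1)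

private lemma phi_facts (β : ℝ) :
    AnalyticAt ℂ (fun w : ℂ => ((1 + w) / (1 - w)) ^ (β:ℂ)) 0 ∧
    (fun w : ℂ => ((1 + w) / (1 - w)) ^ (β:ℂ)) 0 = 1 ∧
    deriv (fun w : ℂ => ((1 + w) / (1 - w)) ^ (β:ℂ)) 0 = 2 * β ∧
    iteratedDeriv 2 (fun w : ℂ => ((1 + w) / (1 - w)) ^ (β:ℂ)) 0 = 4 * β ^ 2 := by
  set φ : ℂ → ℂ := fun w => ((1 + w) / (1 - w)) ^ (β:ℂ) with hφ
  have hb : ∀ w ∈ ball (0:ℂ) 1, HasDerivAt (fun z : ℂ => (1 + z) / (1 - z)) (2 / (1 - w)^2) w := by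
    intro w hw
    rw [mem_ball_zero_iff] at hw
    have h1 : HasDerivAt (fun z : ℂ => 1 + z) 1 w := (hasDerivAt_id w).const_add 1
    have h2 : HasDerivAt (fun z : ℂ => 1 - z) (-1) w := (hasDerivAt_id w).const_sub 1
    have := h1.div h2 (one_sub_ne hw)
    refine this.congr_deriv ?_
    ring
  have hslit : ∀ w ∈ ball (0:ℂ) 1, (1 + w) / (1 - w) ∈ Complex.slitPlane := by
    intro w hw; exact base_slit (mem_ball_zero_iff.mp hw)
  have hφd : ∀ w ∈ ball (0:ℂ) 1,
      HasDerivAt φ ((β:ℂ) * ((1 + w) / (1 - w)) ^ ((β:ℂ) - 1) * (2 / (1 - w)^2)) w := by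
    intro w hw
    exact (hb w hw).cpow_const (hslit w hw)
  have e : deriv φ =ᶠ[𝓝 0] fun w => (β:ℂ) * ((1 + w) / (1 - w)) ^ ((β:ℂ) - 1) * (2 / (1 - w)^2) := by
    filter_upwards [ball_mem_nhds (0:ℂ) one_pos] with w hw using (hφd w hw).deriv
  have hb0 : ((1 : ℂ) + 0) / (1 - 0) = 1 := by norm_num
  refine ⟨?_, ?_, ?_, ?_⟩
  · refine AnalyticAt.cpow ?_ analyticAt_const (by rw [hb0]; exact Complex.one_mem_slitPlane)
    exact (analyticAt_const.add analyticAt_id).div (analyticAt_const.sub analyticAt_id)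
      (by norm_num)
  · simp [hφ]
  · rw [e.self_of_nhds]
    norm_num [Complex.one_cpow]
    ring
  · rw [itd2_eq, e.deriv_eq]
    -- compute derivative of ψ at 0
    have h1 : HasDerivAt (fun w : ℂ => ((1 + w) / (1 - w)) ^ ((β:ℂ) - 1))
        (((β:ℂ) - 1) * (((1:ℂ) + 0)/(1 - 0)) ^ ((β:ℂ) - 1 - 1) * (2 / (1 - 0)^2)) 0 :=
      (hb 0 (mem_ball_self one_pos)).cpow_const (hslit 0 (mem_ball_self one_pos))
    have h2 : HasDerivAt (fun w : ℂ => 2 / (1 - w)^2) 4 0 := by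
      have hden : HasDerivAt (fun w : ℂ => ((1:ℂ) - w)^2) (-2) 0 := by
        have h3 : HasDerivAt (fun z : ℂ => 1 - z) (-1) 0 := (hasDerivAt_id 0).const_sub 1
        have := h3.fun_pow 2
        refine this.congr_deriv ?_
        norm_num
      have := (hasDerivAt_const (0:ℂ) (2:ℂ)).fun_div hden (by norm_num)
      refine this.congr_deriv ?_
      norm_num
    have h4 : HasDerivAt (fun w : ℂ => (β:ℂ) * ((1 + w) / (1 - w)) ^ ((β:ℂ) - 1))
        ((β:ℂ) * (((β:ℂ) - 1) * (((1:ℂ) + 0)/(1 - 0)) ^ ((β:ℂ) - 1 - 1) * (2 / (1 - 0)^2))) 0 :=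
      h1.const_mul _
    have h5 := h4.fun_mul h2
    rw [h5.deriv]
    norm_num [Complex.one_cpow]
    ring

private lemma normSq_identity (a b : ℂ) :
    Complex.normSq (1 - (starRingEnd ℂ) b * a) - Complex.normSq (a - b)
      = (1 - Complex.normSq a) * (1 - Complex.normSq b) := by
  simp only [Complex.normSq_apply, Complex.sub_re, Complex.sub_im, Complex.mul_re,
    Complex.mul_im, Complex.one_re, Complex.one_im, Complex.conj_re, Complex.conj_im]
  ring

private lemma schwarz_coeff {β : ℝ} (hβ0 : 0 < β) (hβ1 : β ≤ 1) {r : ℂ → ℂ}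
    (ha : AnalyticOnNhd ℂ r (ball 0 1)) (h0 : r 0 = 0)
    (hb : ∀ z ∈ ball (0:ℂ) 1, ‖r z‖ < 1) :
    ‖deriv (dslope r 0) 0 + (β:ℂ) * (deriv r 0)^2‖ ≤ 1 := by
  set v := dslope r 0 with hv
  set c₂ := deriv v 0 with hc₂
  have hdiff : DifferentiableOn ℂ r (ball 0 1) := fun z hz =>
    (ha z hz).differentiableAt.differentiableWithinAt
  have hmaps : MapsTo r (ball 0 1) (ball (r 0) 1) := by
    intro z hz
    rw [h0, mem_ball_zero_iff]
    exact hb z hz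
  have hvle : ∀ z ∈ ball (0:ℂ) 1, ‖v z‖ ≤ 1 := by
    intro z hz
    have := Complex.norm_dslope_le_div_of_mapsTo_ball hdiff (hmaps.mono_right ball_subset_closedBall) hz
    simpa using this
  have hvd : DifferentiableOn ℂ v (ball 0 1) :=
    (differentiableOn_dslope (ball_mem_nhds _ one_pos)).mpr hdiff
  have hc₁ : deriv r 0 = v 0 := (dslope_same r 0).symm
  have hv0le : ‖v 0‖ ≤ 1 := hvle 0 (mem_ball_self one_pos)
  rw [hc₁]
  by_cases hex : ∃ z₀ ∈ ball (0:ℂ) 1, ‖v z₀‖ = 1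
  · obtain ⟨z₀, hz₀, hnorm⟩ := hex
    have hmax : IsMaxOn (norm ∘ v) (ball 0 1) z₀ := by
      intro z hz
      simp only [Function.comp_apply, hnorm, Set.mem_setOf_eq]
      exact hvle z hz
    have heq := Complex.eqOn_of_isPreconnected_of_isMaxOn_norm
      (convex_ball (0:ℂ) 1).isPreconnected isOpen_ball hvd hz₀ hmax
    have hev : v =ᶠ[𝓝 0] fun _ => v z₀ :=
      eventually_of_mem (ball_mem_nhds _ one_pos) (fun z hz => heq hz)
    have hzero : c₂ = 0 := by
      rw [hc₂, hev.deriv_eq, deriv_const]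
    rw [hzero, zero_add]
    rw [norm_mul, norm_pow, Complex.norm_real, Real.norm_eq_abs, abs_of_pos hβ0]
    have : ‖v 0‖ ≤ 1 := by simpa using hv0le
    nlinarith [norm_nonneg (v 0)]
  · push_neg at hex
    have hvlt : ∀ z ∈ ball (0:ℂ) 1, ‖v z‖ < 1 := fun z hz =>
      lt_of_le_of_ne (hvle z hz) (hex z hz)
    have hv0lt : ‖v 0‖ < 1 := hvlt 0 (mem_ball_self one_pos)
    set b := v 0 with hbdef
    have hden : ∀ z ∈ ball (0:ℂ) 1, (1:ℂ) - (starRingEnd ℂ) b * v z ≠ 0 := by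
      intro z hz h
      have h1 : (starRingEnd ℂ) b * v z = 1 := by linear_combination -h
      have h2 : ‖(starRingEnd ℂ) b * v z‖ = 1 := by rw [h1]; simp
      rw [norm_mul, Complex.norm_conj] at h2
      have hb1 : ‖b‖ < 1 := hv0lt
      have hv1 : ‖v z‖ ≤ 1 := hvle z hz
      nlinarith [norm_nonneg b, norm_nonneg (v z)]
    set t := fun z => (v z - b) / (1 - (starRingEnd ℂ) b * v z) with ht
    have ht0 : t 0 = 0 := by simp [ht, hbdef]
    have htd : DifferentiableOn ℂ t (ball 0 1) := by
      apply DifferentiableOn.div (hvd.sub_const b)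
      · exact (differentiableOn_const 1).sub ((differentiableOn_const _).mul hvd)
      · exact hden
    have htmaps : MapsTo t (ball 0 1) (ball (t 0) 1) := by
      intro z hz
      rw [ht0, mem_ball_zero_iff]
      have hnum := normSq_identity (v z) b
      have hvz : Complex.normSq (v z) < 1 := by
        have h3 := Complex.sq_norm (v z)
        have h2 : ‖v z‖ < 1 := by
          have := hvlt z hz; exact this
        nlinarith [norm_nonneg (v z)]
      have hbq : Complex.normSq b < 1 := by
        have h3 := Complex.sq_norm b
        have h2 : ‖b‖ < 1 := by exact hv0lt
        nlinarith [norm_nonneg b]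
      have hposden : 0 < Complex.normSq (1 - (starRingEnd ℂ) b * v z) :=
        Complex.normSq_pos.mpr (hden z hz)
      have hlt : Complex.normSq ((v z - b) / (1 - (starRingEnd ℂ) b * v z)) < 1 := by
        rw [Complex.normSq_div]
        rw [div_lt_one hposden]
        nlinarith
      show ‖(v z - b) / (1 - (starRingEnd ℂ) b * v z)‖ < 1
      have := Complex.sq_norm ((v z - b) / (1 - (starRingEnd ℂ) b * v z))
      nlinarith [norm_nonneg ((v z - b) / (1 - (starRingEnd ℂ) b * v z))]
    have hschwarz := Complex.norm_dslope_le_div_of_mapsTo_ball htd (htmaps.mono_right ball_subset_closedBall) (mem_ball_self one_pos)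
    rw [dslope_same] at hschwarz
    -- compute deriv t 0
    have hvda : HasDerivAt v c₂ 0 := by
      have : DifferentiableAt ℂ v 0 :=
        (hvd.differentiableAt (ball_mem_nhds _ one_pos))
      exact this.hasDerivAt
    have hd0 : (1:ℂ) - (starRingEnd ℂ) b * b ≠ 0 := by
      have := hden 0 (mem_ball_self one_pos)
      rwa [← hbdef] at this
    have htda : HasDerivAt t ((c₂ * (1 - (starRingEnd ℂ) b * v 0) - (v 0 - b) *
        (0 - ((starRingEnd ℂ) b * c₂))) / (1 - (starRingEnd ℂ) b * v 0)^2) 0 := by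
      apply HasDerivAt.div (hvda.sub_const b)
      · exact (hasDerivAt_const _ (1:ℂ)).sub ((hvda.const_mul _))
      · rw [← hbdef]; exact hd0
    have hderiv_t : deriv t 0 = c₂ / (1 - (starRingEnd ℂ) b * b) := by
      rw [htda.deriv, ← hbdef]
      field_simp
      ring
    rw [hderiv_t] at hschwarz
    have hcb : (starRingEnd ℂ) b * b = (Complex.normSq b : ℂ) := by
      rw [mul_comm, Complex.mul_conj]
    have hbq : Complex.normSq b < 1 := by
      have h3 := Complex.sq_norm b
      have h2 : ‖b‖ < 1 := by exact hv0lt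
      nlinarith [norm_nonneg b]
    have habs_den : ‖1 - (starRingEnd ℂ) b * b‖ = 1 - Complex.normSq b := by
      rw [hcb]
      have : (1:ℂ) - (Complex.normSq b : ℂ) = ((1 - Complex.normSq b : ℝ) : ℂ) := by push_cast; ring
      rw [this, Complex.norm_real, Real.norm_eq_abs, abs_of_pos (by linarith)]
    have hc2le : ‖c₂‖ ≤ 1 - Complex.normSq b := by
      have : ‖c₂ / (1 - (starRingEnd ℂ) b * b)‖ ≤ 1 / 1 := hschwarz
      rw [norm_div, habs_den] at this
      rw [div_le_div_iff₀ (by linarith) one_pos] at this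
      linarith
    calc ‖c₂ + (β:ℂ) * (v 0)^2‖
        ≤ ‖c₂‖ + ‖(β:ℂ) * (v 0)^2‖ := norm_add_le _ _
      _ ≤ 1 := by
          rw [norm_mul, norm_pow, Complex.norm_real, Real.norm_eq_abs, abs_of_pos hβ0]
          have h1 : (‖v 0‖)^2 = Complex.normSq b := by
            rw [Complex.sq_norm]
          rw [h1]
          nlinarith [Complex.normSq_nonneg b]

private lemma itd3_add {u v : ℂ → ℂ} {x : ℂ} (hu : AnalyticAt ℂ u x) (hv : AnalyticAt ℂ v x) :
    iteratedDeriv 3 (fun z => u z + v z) x = iteratedDeriv 3 u x + iteratedDeriv 3 v x := by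
  have e1 := ev_deriv_add hu hv
  have e2 := e1.deriv.trans (ev_deriv_add (aderiv hu) (aderiv hv))
  have e3 := e2.deriv.trans (ev_deriv_add (aderiv (aderiv hu)) (aderiv (aderiv hv)))
  simp only [itd3_eq]
  exact e3.self_of_nhds

private lemma itd3_cmul (c : ℂ) {u : ℂ → ℂ} {x : ℂ} (hu : AnalyticAt ℂ u x) :
    iteratedDeriv 3 (fun z => c * u z) x = c * iteratedDeriv 3 u x := by
  have e1 := ev_deriv_cmul c hu
  have e2 := e1.deriv.trans (ev_deriv_cmul c (aderiv hu))
  have e3 := e2.deriv.trans (ev_deriv_cmul c (aderiv (aderiv hu)))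
  simp only [itd3_eq]
  exact e3.self_of_nhds

private lemma key {lam β : ℝ} (hβ0 : 0 < β) (hβ1 : β ≤ 1) {F r : ℂ → ℂ}
    (hF : AnalyticOnNhd ℂ F (ball 0 1)) (hF0 : F 0 = 0) (hr : IsSchwarz r)
    (heq : ∀ z ∈ ball (0:ℂ) 1, z ≠ 0 →
      (1 - (lam:ℂ)) * (F z / z) + (lam:ℂ) * deriv F z = ((1 + r z) / (1 - r z)) ^ (β:ℂ)) :
    ∃ e : ℂ, ‖e‖ ≤ 1 ∧ ((1:ℂ) + 2*(lam:ℂ)) * coeff F 3 = 2*(β:ℂ)*e := by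
  obtain ⟨hra, hr0, hrb⟩ := hr
  have hr00 : AnalyticAt ℂ r 0 := hra 0 (mem_ball_self one_pos)
  set v := dslope r 0 with hv
  have hv0 : AnalyticAt ℂ v 0 := by
    obtain ⟨p, hp⟩ := hr00
    exact ⟨p.fslope, hp.has_fpower_series_dslope_fslope⟩
  have hrv : r = fun z => z * v z := by
    funext z
    rcases eq_or_ne z 0 with rfl | hz
    · simp [hr0]
    · rw [hv, dslope_of_ne r hz, slope_def_field]
      field_simp
      rw [hr0]
      ring
  have hitd2r : iteratedDeriv 2 r 0 = 2 * deriv v 0 := by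
    conv_lhs => rw [hrv]
    exact (idmul_derivs hv0).1
  have hkey2 : ‖deriv v 0 + (β:ℂ) * (deriv r 0)^2‖ ≤ 1 :=
    schwarz_coeff hβ0 hβ1 hra hr0 hrb
  obtain ⟨hφa, hφ0, hφ1, hφ2⟩ := phi_facts β
  set φ : ℂ → ℂ := fun w => ((1 + w) / (1 - w)) ^ (β:ℂ) with hφdef
  have hφar : AnalyticAt ℂ φ (r 0) := by rw [hr0]; exact hφa
  have hφr : AnalyticAt ℂ (fun z => φ (r z)) 0 := hφar.comp hr00
  have hF00 : AnalyticAt ℂ F 0 := hF 0 (mem_ball_self one_pos)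
  have hdF : AnalyticAt ℂ (deriv F) 0 := aderiv hF00
  -- the functional equation, multiplied by z
  have hL : (fun z => (1 - (lam:ℂ)) * F z + (lam:ℂ) * (z * deriv F z))
      =ᶠ[𝓝 0] fun z => z * φ (r z) := by
    filter_upwards [ball_mem_nhds (0:ℂ) one_pos] with z hz
    rcases eq_or_ne z 0 with rfl | hne
    · simp [hF0]
    · have h := heq z hz hne
      have h2 : z * ((1 - (lam:ℂ)) * (F z / z) + (lam:ℂ) * deriv F z) = z * φ (r z) := by
        rw [h]
      rw [← h2]
      field_simp
  have h3 := hL.iteratedDeriv_eq 3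
  -- compute left side
  have hzdF : AnalyticAt ℂ (fun z : ℂ => z * deriv F z) 0 := analyticAt_id.mul hdF
  have hlhs : iteratedDeriv 3 (fun z => (1 - (lam:ℂ)) * F z + (lam:ℂ) * (z * deriv F z)) 0
      = (1 - (lam:ℂ)) * iteratedDeriv 3 F 0 + (lam:ℂ) * (3 * iteratedDeriv 3 F 0) := by
    rw [itd3_add (u := fun z => (1 - (lam:ℂ)) * F z) (v := fun z => (lam:ℂ) * (z * deriv F z))
      ((analyticAt_const).mul hF00) ((analyticAt_const).mul hzdF)]
    have e1 : iteratedDeriv 3 (fun z => (1 - (lam:ℂ)) * F z) 0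
        = (1 - (lam:ℂ)) * iteratedDeriv 3 F 0 := itd3_cmul _ hF00
    have e2 : iteratedDeriv 3 (fun z => (lam:ℂ) * (z * deriv F z)) 0
        = (lam:ℂ) * iteratedDeriv 3 (fun z : ℂ => z * deriv F z) 0 := itd3_cmul _ hzdF
    rw [e1, e2, (idmul_derivs hdF).2]
    have h5 : iteratedDeriv 3 F = iteratedDeriv 2 (deriv F) := iteratedDeriv_succ'
    rw [← h5]
  -- compute right side
  have hrhs : iteratedDeriv 3 (fun z => z * φ (r z)) 0
      = 3 * ((4*(β:ℂ)^2) * (deriv r 0)^2 + (2*(β:ℂ)) * (2 * deriv v 0)) := by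
    rw [(idmul_derivs hφr).2, (comp_derivs hr00 hφar).2.1, hitd2r]
    rw [hr0, hφ1, hφ2]
  refine ⟨deriv v 0 + (β:ℂ) * (deriv r 0)^2, hkey2, ?_⟩
  have hX : (1 - (lam:ℂ)) * iteratedDeriv 3 F 0 + (lam:ℂ) * (3 * iteratedDeriv 3 F 0)
      = 3 * ((4*(β:ℂ)^2) * (deriv r 0)^2 + (2*(β:ℂ)) * (2 * deriv v 0)) := by
    rw [← hlhs, ← hrhs, h3]
  have hcoeff : coeff F 3 = iteratedDeriv 3 F 0 / 6 := by
    simp [coeff, Nat.factorial]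
  rw [hcoeff]
  field_simp
  linear_combination hX

/-- Bounds for the class ℬ_Σ(β, λ). -/
theorem stmt_18 (lam β : ℝ) (hlam : 1 ≤ lam) (hβ0 : 0 < β) (hβ1 : β ≤ 1)
    (f g : ℂ → ℂ) (hmem : MemB lam β f g) :
    ‖coeff f 3‖ ≤ 2*β / (2*lam+1) ∧
    ‖coeff f 3 - (coeff f 2)^2‖ ≤ 2*β / (2*lam+1) := by
  obtain ⟨⟨hfa, hfinj, hf0, hf1, hga, hginj, hgf, hfg⟩, ⟨r, hr, heqf⟩, ⟨s, hs, heqg⟩⟩ := hmem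
  have hg0 : g 0 = 0 := by
    have h := hgf.self_of_nhds
    rwa [hf0] at h
  obtain ⟨e, he, hEf⟩ := key hβ0 hβ1 hfa hf0 hr heqf
  obtain ⟨e', he', hEg⟩ := key hβ0 hβ1 hga hg0 hs heqg
  -- inverse function coefficient relations
  have hfa0 : AnalyticAt ℂ f 0 := hfa 0 (mem_ball_self one_pos)
  have hga0 : AnalyticAt ℂ g (f 0) := by rw [hf0]; exact hga 0 (mem_ball_self one_pos)
  have hcomp := comp_derivs hfa0 hga0
  have hGid : (fun z => g (f z)) =ᶠ[𝓝 (0:ℂ)] fun z => z := hgf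
  have hd1 : deriv (fun z => g (f z)) 0 = 1 := by
    rw [hGid.deriv_eq]; simp
  have hd2 : iteratedDeriv 2 (fun z => g (f z)) 0 = 0 := by
    rw [hGid.iteratedDeriv_eq 2, itd2_eq]; simp
  have hd3 : iteratedDeriv 3 (fun z => g (f z)) 0 = 0 := by
    rw [hGid.iteratedDeriv_eq 3, itd3_eq]; simp
  have hg1 : deriv g 0 = 1 := by
    have h := hcomp.1
    rw [hd1, hf0, hf1, mul_one] at h
    exact h.symm
  have hA2 := hcomp.2.1
  rw [hd2, hf0, hf1, hg1] at hA2
  have hA3 := hcomp.2.2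
  rw [hd3, hf0, hf1, hg1] at hA3
  rw [hf0, hg1] at hcomp
  -- hA2 : 0 = itd2 g 0 * 1^2 + 1 * itd2 f 0 ; hA3 similar
  have hb3 : coeff g 3 = 2*(coeff f 2)^2 - coeff f 3 := by
    have h2 : iteratedDeriv 2 g 0 = - iteratedDeriv 2 f 0 := by linear_combination -hA2
    have h3 : iteratedDeriv 3 g 0 = 3*(iteratedDeriv 2 f 0)^2 - iteratedDeriv 3 f 0 := by
      rw [h2] at hA3
      linear_combination -hA3
    simp only [coeff, Nat.factorial]
    push_cast
    rw [h3]
    ring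
  have hlam0 : (0:ℝ) < 2*lam+1 := by linarith
  have habs : ‖(1:ℂ)+2*(lam:ℂ)‖ = 2*lam+1 := by
    have h : ((1:ℂ)+2*(lam:ℂ)) = ((2*lam+1 : ℝ) : ℂ) := by push_cast; ring
    rw [h, Complex.norm_real, Real.norm_eq_abs, abs_of_pos hlam0]
  have h2β : ‖2*(β:ℂ)‖ = 2*β := by
    rw [show (2*(β:ℂ)) = ((2*β:ℝ):ℂ) by push_cast; ring, Complex.norm_real, Real.norm_eq_abs,
      abs_of_pos (by linarith)]
  constructor
  · have h1 : (2*lam+1) * ‖coeff f 3‖ ≤ 2*β := by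
      have hc := congrArg norm hEf
      rw [norm_mul, norm_mul, habs, h2β] at hc
      rw [hc]
      nlinarith [norm_nonneg e, norm_nonneg (coeff f 3)]
    rw [le_div_iff₀ hlam0]
    nlinarith [h1]
  · have hdiff : ((1:ℂ)+2*(lam:ℂ))*(coeff f 3 - (coeff f 2)^2) = (β:ℂ)*e - (β:ℂ)*e' := by
      linear_combination (hEf - hEg + ((1:ℂ)+2*(lam:ℂ))*hb3)/2
    have hc := congrArg norm hdiff
    rw [norm_mul, habs] at hc
    have htri : ‖(β:ℂ)*e - (β:ℂ)*e'‖ ≤ 2*β := by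
      calc ‖(β:ℂ)*e - (β:ℂ)*e'‖
          ≤ ‖(β:ℂ)*e‖ + ‖(β:ℂ)*e'‖ := by
            exact norm_sub_le ((β:ℂ)*e) ((β:ℂ)*e')
        _ ≤ 2*β := by
            rw [norm_mul, norm_mul, Complex.norm_real, Real.norm_eq_abs, abs_of_pos hβ0]
            nlinarith [norm_nonneg e, norm_nonneg e']
    rw [← hc] at htri
    rw [le_div_iff₀ hlam0]
    nlinarith [htri]
end
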